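/- arXiv:1109.0366 — 2 statements merged into one kernel-verified Lean document; each statement's English description precedes it below -/
import Mathlib

section
/- A coupling of a half-turn symmetric configuration of odd size: if π is a perfect matching of {1,...,2L} with L odd that is noncrossing and invariant under i ↦ i + L (mod 2L), then π contains exactly one 'diameter' pair of the form (i, i+L). -/
/-- Points `1, ..., 2L` on a circle are modeled by `ZMod (2L)`. A matching
(given as a function) is noncrossing if no two of its pairs interleave. -/
def IsNoncrossing {m : ℕ} (f : ZMod m → ZMod m) : Prop :=
  ∀ a c : ZMod m, a.val < c.val → c.val < (f a).val → (f a).val < (f c).val → False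

/-- A finset carrying a fixed-point-free involution has even cardinality. -/
lemma even_card_of_fpf_involution {α : Type*} [DecidableEq α] (g : α → α) :
    ∀ s : Finset α, (∀ x ∈ s, g x ∈ s) → (∀ x ∈ s, g (g x) = x) →
      (∀ x ∈ s, g x ≠ x) → Even s.card := by
  intro s
  induction s using Finset.strongInduction with
  | _ s ih =>
    intro hmem hgg hne
    rcases s.eq_empty_or_nonempty with rfl | ⟨x, hx⟩
    · simp
    · have hgx : g x ∈ s := hmem x hx
      have hxne : g x ≠ x := hne x hx
      set t := (s.erase x).erase (g x) with ht
      have htsub : t ⊂ s := by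
        refine Finset.ssubset_of_subset_of_ssubset ?_ (Finset.erase_ssubset hx)
        exact Finset.erase_subset _ _
      have hmemt : ∀ y ∈ t, g y ∈ t := by
        intro y hy
        have hys : y ∈ s := Finset.mem_of_mem_erase (Finset.mem_of_mem_erase hy)
        have hy1 : y ≠ g x := Finset.ne_of_mem_erase hy
        have hy2 : y ≠ x := Finset.ne_of_mem_erase (Finset.mem_of_mem_erase hy)
        refine Finset.mem_erase.2 ⟨?_, Finset.mem_erase.2 ⟨?_, hmem y hys⟩⟩
        · intro h; exact hy2 (by rw [← hgg x hx, ← h, hgg y hys])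
        · intro h; exact hy1 (by rw [← h, hgg y hys])
      have hggt : ∀ y ∈ t, g (g y) = y := fun y hy =>
        hgg y (Finset.mem_of_mem_erase (Finset.mem_of_mem_erase hy))
      have hnet : ∀ y ∈ t, g y ≠ y := fun y hy =>
        hne y (Finset.mem_of_mem_erase (Finset.mem_of_mem_erase hy))
      have heven := ih t htsub hmemt hggt hnet
      have hcard : s.card = t.card + 2 := by
        have h1 : (s.erase x).card = s.card - 1 := Finset.card_erase_of_mem hx
        have h2 : t.card = (s.erase x).card - 1 :=
          Finset.card_erase_of_mem (Finset.mem_erase.2 ⟨hxne, hgx⟩)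
        have hpos : 0 < s.card := Finset.card_pos.2 ⟨x, hx⟩
        have hpos2 : 0 < (s.erase x).card :=
          Finset.card_pos.2 ⟨g x, Finset.mem_erase.2 ⟨hxne, hgx⟩⟩
        omega
      rw [hcard]
      rcases heven with ⟨k, hk⟩
      exact ⟨k + 1, by omega⟩

/-- If `L` is odd and `π` is a noncrossing perfect matching of `{1, ..., 2L}`
invariant under the half-turn `i ↦ i + L (mod 2L)`, then `π` contains exactly
one diameter pair `(i, i + L)`. -/
theorem odd_halfturn_unique_diameter (L : ℕ) (hL : Odd L)
    (f : ZMod (2 * L) → ZMod (2 * L))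
    (hinv : Function.Involutive f) (hfix : ∀ x, f x ≠ x)
    (hnc : IsNoncrossing f)
    (hsym : ∀ x, f (x + (L : ZMod (2 * L))) = f x + (L : ZMod (2 * L))) :
    ∃ i : ZMod (2 * L), f i = i + (L : ZMod (2 * L)) ∧
      ∀ j : ZMod (2 * L), f j = j + (L : ZMod (2 * L)) →
        j = i ∨ j = i + (L : ZMod (2 * L)) := by
  have hL1 : 1 ≤ L := hL.pos
  haveI : NeZero (2 * L) := ⟨by omega⟩
  classical
  have hvalL : (L : ZMod (2 * L)).val = L := by
    rw [ZMod.val_natCast]; exact Nat.mod_eq_of_lt (by omega)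
  have hLL : (L : ZMod (2 * L)) + (L : ZMod (2 * L)) = 0 := by
    have h2 : (L : ZMod (2 * L)) + (L : ZMod (2 * L)) = ((2 * L : ℕ) : ZMod (2 * L)) := by
      push_cast; ring
    rw [h2, ZMod.natCast_self]
  have hxLL : ∀ x : ZMod (2 * L), x + (L : ZMod (2 * L)) + (L : ZMod (2 * L)) = x := by
    intro x; rw [add_assoc, hLL, add_zero]
  have hvalxL_lt : ∀ x : ZMod (2 * L), x.val < L →
      (x + (L : ZMod (2 * L))).val = x.val + L := by
    intro x hx
    rw [ZMod.val_add, hvalL]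
    exact Nat.mod_eq_of_lt (by omega)
  have hvalxL_ge : ∀ x : ZMod (2 * L), L ≤ x.val →
      (x + (L : ZMod (2 * L))).val = x.val - L := by
    intro x hx
    have hlt : x.val < 2 * L := x.val_lt
    rw [ZMod.val_add, hvalL]
    rw [show x.val + L = (x.val - L) + 2 * L by omega, Nat.add_mod_right]
    exact Nat.mod_eq_of_lt (by omega)
  -- Existence
  have hex : ∃ i : ZMod (2 * L), f i = i + (L : ZMod (2 * L)) := by
    by_contra hno
    push_neg at hno
    set T1 : Finset (ZMod (2 * L)) :=
      Finset.univ.filter (fun x => x.val < L) with hT1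
    have hcardT1 : T1.card = L := by
      have hc : T1.card = (Finset.range L).card := by
        apply Finset.card_bij (fun x _ => x.val)
        · intro a ha
          simp only [hT1, Finset.mem_filter, Finset.mem_univ, true_and] at ha
          exact Finset.mem_range.2 ha
        · intro a _ b _ hab
          exact ZMod.val_injective _ hab
        · intro b hb
          have hb' : b < L := Finset.mem_range.1 hb
          refine ⟨(b : ZMod (2 * L)), ?_, ?_⟩
          · simp only [hT1, Finset.mem_filter, Finset.mem_univ, true_and]
            rw [ZMod.val_natCast, Nat.mod_eq_of_lt (by omega)]
            exact hb'
          · rw [ZMod.val_natCast]; exact Nat.mod_eq_of_lt (by omega)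
      rw [hc, Finset.card_range]
    -- the involution on T1
    set g : ZMod (2 * L) → ZMod (2 * L) :=
      fun x => if (f x).val < L then f x else f x + (L : ZMod (2 * L)) with hg
    have hmem : ∀ x ∈ T1, g x ∈ T1 := by
      intro x hx
      simp only [hT1, Finset.mem_filter, Finset.mem_univ, true_and] at hx ⊢
      by_cases h : (f x).val < L
      · simp [hg, h]
      · simp only [hg, if_neg h]
        rw [hvalxL_ge _ (not_lt.1 h)]
        have := (f x).val_lt
        omega
    have hgg : ∀ x ∈ T1, g (g x) = x := by
      intro x hx
      simp only [hT1, Finset.mem_filter, Finset.mem_univ, true_and] at hx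
      by_cases h : (f x).val < L
      · simp only [hg, if_pos h, hinv x, if_pos hx]
      · simp only [hg, if_neg h]
        have h1 : f (f x + (L : ZMod (2 * L))) = x + (L : ZMod (2 * L)) := by
          rw [hsym, hinv x]
        rw [h1]
        have h2 : ¬ (x + (L : ZMod (2 * L))).val < L := by
          rw [hvalxL_lt x hx]; omega
        rw [if_neg h2, hxLL]
    have hne : ∀ x ∈ T1, g x ≠ x := by
      intro x _
      by_cases h : (f x).val < L
      · simp only [hg, if_pos h]; exact hfix x
      · simp only [hg, if_neg h]
        intro hEq
        apply hno x
        have := congrArg (· + (L : ZMod (2 * L))) hEq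
        rw [hxLL] at this
        exact this
    have heven : Even T1.card := even_card_of_fpf_involution g T1 hmem hgg hne
    rw [hcardT1] at heven
    exact (Nat.not_even_iff_odd.2 hL) heven
  -- Uniqueness
  obtain ⟨i, hi⟩ := hex
  -- normalize any diameter point to the representative with val < L
  have key : ∀ a b : ZMod (2 * L), a.val < L → b.val < L →
      f a = a + (L : ZMod (2 * L)) → f b = b + (L : ZMod (2 * L)) → a = b := by
    intro a b ha hb hfa hfb
    by_contra hab
    have hvv : a.val ≠ b.val := fun h => hab (ZMod.val_injective _ h)
    rcases lt_or_gt_of_ne hvv with h | h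
    · exact hnc a b h (by rw [hfa, hvalxL_lt a ha]; omega)
        (by rw [hfa, hfb, hvalxL_lt a ha, hvalxL_lt b hb]; omega)
    · exact hnc b a h (by rw [hfb, hvalxL_lt b hb]; omega)
        (by rw [hfa, hfb, hvalxL_lt a ha, hvalxL_lt b hb]; omega)
  refine ⟨i, hi, ?_⟩
  intro j hj
  by_contra hcon
  push_neg at hcon
  obtain ⟨hj1, hj2⟩ := hcon
  -- representatives with val < L
  have hdiam : ∀ x : ZMod (2 * L), f x = x + (L : ZMod (2 * L)) →
      f (x + (L : ZMod (2 * L))) = (x + (L : ZMod (2 * L))) + (L : ZMod (2 * L)) := by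
    intro x hx
    rw [hsym, hx]
  have repr : ∀ x : ZMod (2 * L), f x = x + (L : ZMod (2 * L)) →
      ∃ a : ZMod (2 * L), a.val < L ∧ f a = a + (L : ZMod (2 * L)) ∧
        (a = x ∨ a = x + (L : ZMod (2 * L))) := by
    intro x hx
    by_cases h : x.val < L
    · exact ⟨x, h, hx, Or.inl rfl⟩
    · refine ⟨x + (L : ZMod (2 * L)), ?_, hdiam x hx, Or.inr rfl⟩
      rw [hvalxL_ge x (not_lt.1 h)]
      have := x.val_lt
      omega
  obtain ⟨a, ha, hfa, hai⟩ := repr i hi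
  obtain ⟨b, hb, hfb, hbj⟩ := repr j hj
  have hab : a = b := key a b ha hb hfa hfb
  have addL_inj : ∀ u v : ZMod (2 * L), u + (L : ZMod (2 * L)) = v + (L : ZMod (2 * L)) → u = v := by
    intro u v h
    have h2 := congrArg (· + (L : ZMod (2 * L))) h
    rwa [hxLL, hxLL] at h2
  rcases hai with hai | hai <;> rcases hbj with hbj | hbj
  · exact hj1 (by rw [← hbj, ← hab]; exact hai)
  · apply hj2; rw [← hai, hab, hbj, hxLL]
  · apply hj2; rw [← hbj, ← hab]; exact hai
  · exact hj1 (addL_inj j i (by rw [← hbj, ← hab, hai]))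
end

section
/- If π is a noncrossing perfect matching of {1,...,2L} with L even that is invariant under the shift i ↦ i + L (mod 2L), then π contains no pair of the form (i, i+L). -/
/-- An involution without fixed points on a finset mapping it to itself forces even card. -/
lemma even_card_of_involution {α : Type*} [DecidableEq α] (s : Finset α) (g : α → α)
    (hmem : ∀ a ∈ s, g a ∈ s) (hgg : ∀ a ∈ s, g (g a) = a) (hne : ∀ a ∈ s, g a ≠ a) :
    Even s.card := by
  have h : ∑ _x ∈ s, (1 : ZMod 2) = 0 := by
    refine Finset.sum_involution (fun a _ => g a) (fun a ha => ?_) (fun a ha _ => hne a ha)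
      (fun a ha => hmem a ha) (fun a ha => hgg a ha)
    decide
  rw [Finset.sum_const, nsmul_eq_mul, mul_one] at h
  have := (ZMod.natCast_eq_zero_iff s.card 2).mp h
  exact even_iff_two_dvd.mpr this

lemma key_case (L : ℕ) (hL : Even L) (hLpos : 0 < L)
    (f : ZMod (2 * L) → ZMod (2 * L))
    (hinv : Function.Involutive f) (hfix : ∀ x, f x ≠ x)
    (hnc : IsNoncrossing f)
    (i : ZMod (2 * L)) (hi : f i = i + (L : ZMod (2 * L))) (hvi : i.val < L) : False := by
  haveI : NeZero (2 * L) := ⟨by omega⟩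
  have hLval : ((L : ℕ) : ZMod (2 * L)).val = L := ZMod.val_cast_of_lt (by omega)
  have hb : (i + (L : ZMod (2 * L))).val = i.val + L := by
    rw [ZMod.val_add, hLval, Nat.mod_eq_of_lt (by omega)]
  have hvalinj : Function.Injective (ZMod.val (n := 2 * L)) := ZMod.val_injective _
  set S : Finset (ZMod (2 * L)) :=
    Finset.univ.filter (fun x => i.val < x.val ∧ x.val < i.val + L) with hS
  -- f maps S to S
  have hmapsto : ∀ x ∈ S, f x ∈ S := by
    intro x hx
    rw [hS, Finset.mem_filter] at hx
    obtain ⟨-, hx1, hx2⟩ := hx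
    have hffx : f (f x) = x := hinv x
    have hne_i : f x ≠ i := by
      intro h
      have : x = f i := by rw [← h, hffx]
      rw [hi] at this
      rw [this, hb] at hx2
      omega
    have hne_b : f x ≠ i + (L : ZMod (2 * L)) := by
      intro h
      have : x = f (i + (L : ZMod (2 * L))) := by rw [← h, hffx]
      have hfb : f (i + (L : ZMod (2 * L))) = i := by rw [← hi, hinv]
      rw [hfb] at this
      subst this
      omega
    rcases lt_trichotomy (f x).val i.val with h1 | h1 | h1
    · -- chord crosses on the left
      exact absurd (hnc (f x) i h1 (by rw [hffx]; omega) (by rw [hffx, hi, hb]; omega)) not_false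
    · exact absurd (hvalinj h1) hne_i
    rcases lt_trichotomy (f x).val (i.val + L) with h2 | h2 | h2
    · rw [hS, Finset.mem_filter]
      exact ⟨Finset.mem_univ _, h1, h2⟩
    · exact absurd (hvalinj (h2.trans hb.symm)) hne_b
    · -- chord crosses on the right
      exact absurd (hnc i x (by omega) (by rw [hi, hb]; omega) (by rw [hi, hb]; omega)) not_false
  have heven : Even S.card :=
    even_card_of_involution S f hmapsto (fun a _ => hinv a) (fun a _ => hfix a)
  -- compute card of S
  have hcard : S.card = L - 1 := by
    have : S.card = (Finset.Ioo i.val (i.val + L)).card := by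
      refine Finset.card_bij (fun x _ => x.val) ?_ ?_ ?_
      · intro x hx
        rw [hS, Finset.mem_filter] at hx
        rw [Finset.mem_Ioo]
        exact ⟨hx.2.1, hx.2.2⟩
      · intro x hx y hy h
        exact hvalinj h
      · intro n hn
        rw [Finset.mem_Ioo] at hn
        refine ⟨(n : ZMod (2 * L)), ?_, ?_⟩
        · rw [hS, Finset.mem_filter, ZMod.val_cast_of_lt (by omega)]
          exact ⟨Finset.mem_univ _, hn.1, hn.2⟩
        · exact ZMod.val_cast_of_lt (by omega)
    rw [this, Nat.card_Ioo]
    omega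
  rw [hcard] at heven
  obtain ⟨k, hk⟩ := hL
  obtain ⟨m, hm⟩ := heven
  omega

/-- If `L` is even and `π` is a noncrossing perfect matching of `{1, ..., 2L}`
invariant under the half-turn `i ↦ i + L (mod 2L)`, then `π` contains no
diameter pair `(i, i + L)`. -/
theorem even_halfturn_no_diameter (L : ℕ) (hL : Even L) (hLpos : 0 < L)
    (f : ZMod (2 * L) → ZMod (2 * L))
    (hinv : Function.Involutive f) (hfix : ∀ x, f x ≠ x)
    (hnc : IsNoncrossing f)
    (hsym : ∀ x, f (x + (L : ZMod (2 * L))) = f x + (L : ZMod (2 * L))) :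
    ∀ i : ZMod (2 * L), f i ≠ i + (L : ZMod (2 * L)) := by
  intro i hi
  haveI : NeZero (2 * L) := ⟨by omega⟩
  have hLval : ((L : ℕ) : ZMod (2 * L)).val = L := ZMod.val_cast_of_lt (by omega)
  rcases lt_or_ge i.val L with h | h
  · exact key_case L hL hLpos f hinv hfix hnc i hi h
  · -- use j = i + L instead
    have hLL : (L : ZMod (2 * L)) + (L : ZMod (2 * L)) = 0 := by
      have : ((2 * L : ℕ) : ZMod (2 * L)) = 0 := ZMod.natCast_self _
      rw [← this]
      push_cast
      ring
    have hj : f (i + (L : ZMod (2 * L))) = (i + (L : ZMod (2 * L))) + (L : ZMod (2 * L)) := by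
      rw [← hi, hinv, hi, add_assoc, hLL, add_zero]
    have hjv : (i + (L : ZMod (2 * L))).val < L := by
      have h2 : i.val < 2 * L := ZMod.val_lt i
      have : (i + (L : ZMod (2 * L))).val = (i.val + L) % (2 * L) := by
        rw [ZMod.val_add, hLval]
      rw [this]
      have : (i.val + L) % (2 * L) = i.val + L - 2 * L := by
        rw [Nat.mod_eq_sub_mod (by omega), Nat.mod_eq_of_lt (by omega)]
      omega
    exact key_case L hL hLpos f hinv hfix hnc (i + (L : ZMod (2 * L))) hj hjv
end
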